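/- arXiv:1112.4036 — 7 statements merged into one kernel-verified Lean document; each statement's English description precedes it below -/
import Mathlib

section
/- The spectrum of J consists exactly of the n+2 pairwise distinct real numbers λ_0 = 1, λ_m = 2√(pq)·cos(mπ/(n+1)) for m = 1,…,n, and λ_{n+1} = −1. -/
open Filter Finset

/-- The `(n+2) × (n+2)` Jacobi matrix of the reflected random walk on the path:
zero diagonal, `J(0,1) = √q`, `J(i,i+1) = √(pq)` for `1 ≤ i ≤ n-1`, `J(n,n+1) = √p`,
and symmetric. -/
noncomputable def jacobiM (p q : ℝ) (n : ℕ) : Matrix (Fin (n + 2)) (Fin (n + 2)) ℝ :=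
  fun k l =>
    if k.1 + 1 = l.1 then
      (if k.1 = 0 then Real.sqrt q else if k.1 = n then Real.sqrt p else Real.sqrt (p * q))
    else if l.1 + 1 = k.1 then
      (if l.1 = 0 then Real.sqrt q else if l.1 = n then Real.sqrt p else Real.sqrt (p * q))
    else 0

/-- The claimed eigenvalues of `J`: `λ_0 = 1`, `λ_m = 2√(pq)·cos(mπ/(n+1))` for
`1 ≤ m ≤ n`, and `λ_{n+1} = -1`. -/
noncomputable def jacobiEigenvalue (p q : ℝ) (n : ℕ) (m : Fin (n + 2)) : ℝ :=
  if m.1 = 0 then 1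
  else if m.1 = n + 1 then -1
  else 2 * Real.sqrt (p * q) * Real.cos (m.1 * Real.pi / (n + 1))

/-! ### Auxiliary definitions -/

/-- The off-diagonal coefficients of the Jacobi matrix. -/
noncomputable def jacCC (p q : ℝ) (n : ℕ) (i : ℕ) : ℝ :=
  if i = 0 then Real.sqrt q else if i = n then Real.sqrt p else Real.sqrt (p * q)

/-- The eigenvector for eigenvalue `1` (up to sign flips for `-1`). -/
noncomputable def jacU (p q : ℝ) (n : ℕ) (i : ℕ) : ℝ :=
  Real.sqrt p ^ (i - 1) * Real.sqrt q ^ (n - i)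

/-- The auxiliary trigonometric sequence for the interior eigenvalues. -/
noncomputable def jacF (p q θ : ℝ) (i : ℕ) : ℝ :=
  (p - q) * Real.cos θ * Real.sin (i * θ) + Real.sin θ * Real.cos (i * θ)

/-- The eigenvector for an interior eigenvalue `2√(pq)cos θ`. -/
noncomputable def jacWT (p q : ℝ) (n : ℕ) (θ : ℝ) (i : ℕ) : ℝ :=
  if i = 0 then Real.sqrt p * Real.sin θ
  else if i = n + 1 then Real.sqrt q * jacF p q θ (n+1)
  else jacF p q θ i

/-- The full eigenvector family. -/
noncomputable def jacVec (p q : ℝ) (n : ℕ) (m : Fin (n + 2)) : ℕ → ℝ :=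
  if m.1 = 0 then jacU p q n
  else if m.1 = n + 1 then (fun i => (-1 : ℝ) ^ i * jacU p q n i)
  else jacWT p q n ((m.1 : ℝ) * Real.pi / ((n : ℝ) + 1))

section
variable {p q θ : ℝ} {n : ℕ}

lemma jacobiM_eq (k l : Fin (n+2)) :
    jacobiM p q n k l = if k.1 + 1 = l.1 then jacCC p q n k.1
      else if l.1 + 1 = k.1 then jacCC p q n l.1 else 0 := rfl

lemma jac_mulVec_apply (w : ℕ → ℝ) (k : Fin (n + 2)) :
    (jacobiM p q n).mulVec (fun i => w i.1) k =
      (if 1 ≤ k.1 then jacCC p q n (k.1 - 1) * w (k.1 - 1) else 0) +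
      (if k.1 ≤ n then jacCC p q n k.1 * w (k.1 + 1) else 0) := by
  have hsummand : ∀ l : Fin (n+2), jacobiM p q n k l * w l.1 =
      (if l.1 + 1 = k.1 then jacCC p q n l.1 * w l.1 else 0) +
      (if k.1 + 1 = l.1 then jacCC p q n k.1 * w l.1 else 0) := by
    intro l
    rw [jacobiM_eq]
    split_ifs with h1 h2 h2 <;> first | omega | ring
  rw [Matrix.mulVec, dotProduct]
  rw [Finset.sum_congr rfl fun l _ => hsummand l, Finset.sum_add_distrib]
  congr 1
  · by_cases hk : 1 ≤ k.1
    · have hlt : k.1 - 1 < n + 2 := by omega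
      rw [if_pos hk]
      rw [show (∑ l : Fin (n+2), if l.1 + 1 = k.1 then jacCC p q n l.1 * w l.1 else 0)
          = ∑ l : Fin (n+2), if (⟨k.1-1, hlt⟩ : Fin (n+2)) = l then jacCC p q n l.1 * w l.1 else 0
          from Finset.sum_congr rfl fun l _ =>
            if_congr (by simp only [Fin.ext_iff, Fin.val_mk]; try omega) rfl rfl]
      rw [Finset.sum_ite_eq]
      simp
    · rw [if_neg hk]
      refine Finset.sum_eq_zero fun l _ => if_neg (by omega)
  · by_cases hk : k.1 ≤ n
    · have hlt : k.1 + 1 < n + 2 := by omega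
      rw [if_pos hk]
      rw [show (∑ l : Fin (n+2), if k.1 + 1 = l.1 then jacCC p q n k.1 * w l.1 else 0)
          = ∑ l : Fin (n+2), if (⟨k.1+1, hlt⟩ : Fin (n+2)) = l then jacCC p q n k.1 * w l.1 else 0
          from Finset.sum_congr rfl fun l _ =>
            if_congr (by simp only [Fin.ext_iff, Fin.val_mk]; try omega) rfl rfl]
      rw [Finset.sum_ite_eq]
      simp
    · rw [if_neg hk]
      refine Finset.sum_eq_zero fun l _ => if_neg (by omega)

lemma jac_mulVec_eq_of (hn : 1 ≤ n) (w : ℕ → ℝ) (lam : ℝ)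
    (h0 : Real.sqrt q * w 1 = lam * w 0)
    (hmid : ∀ k, 1 ≤ k → k ≤ n →
      jacCC p q n (k-1) * w (k-1) + jacCC p q n k * w (k+1) = lam * w k)
    (htop : Real.sqrt p * w n = lam * w (n+1)) :
    (jacobiM p q n).mulVec (fun i => w i.1) = lam • (fun i : Fin (n+2) => w i.1) := by
  funext k
  rw [jac_mulVec_apply, Pi.smul_apply, smul_eq_mul]
  by_cases hk0 : k.1 = 0
  · rw [hk0, if_neg (by omega), if_pos (by omega), zero_add]
    simpa only [jacCC, if_pos rfl, zero_add, if_true] using h0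
  · by_cases hk1 : k.1 = n + 1
    · rw [hk1, if_pos (by omega), if_neg (by omega), add_zero,
        show n + 1 - 1 = n by omega]
      simpa only [jacCC, if_neg (show ¬ n = 0 by omega), if_pos rfl, if_true] using htop
    · rw [if_pos (by omega), if_pos (by omega : k.1 ≤ n)]
      exact hmid k.1 (by omega) (by omega)

/-! ### The eigenvalue `±1` -/

lemma jac_base_mid (hn : 1 ≤ n) (hp0 : 0 < p) (hq0 : 0 < q) (hpq : p + q = 1)
    (k : ℕ) (hk1 : 1 ≤ k) (hkn : k ≤ n) :
    jacCC p q n (k - 1) * jacU p q n (k - 1) + jacCC p q n k * jacU p q n (k + 1)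
      = jacU p q n k := by
  have hp2 : Real.sqrt p ^ 2 = p := Real.sq_sqrt hp0.le
  have hq2 : Real.sqrt q ^ 2 = q := Real.sq_sqrt hq0.le
  have hpq' : Real.sqrt (p * q) = Real.sqrt p * Real.sqrt q := Real.sqrt_mul hp0.le q
  obtain ⟨j, rfl⟩ : ∃ j, k = j + 1 := ⟨k - 1, by omega⟩
  rcases j with _ | i
  · by_cases h1 : n = 1
    · subst h1
      simp only [jacCC, jacU, hpq']
      norm_num
      linear_combination hq2 + hp2 + hpq
    · obtain ⟨d, rfl⟩ : ∃ d, n = d + 2 := ⟨n - 2, by omega⟩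
      simp only [jacCC, jacU, hpq', if_neg (show ¬ (1:ℕ) = d + 2 by omega)]
      norm_num
      linear_combination (Real.sqrt q^(d+1)) * hq2 + (Real.sqrt q^(d+1)) * hp2
        + (Real.sqrt q^(d+1)) * hpq
  · rw [show i + 1 + 1 - 1 = i + 1 by omega]
    by_cases hkn' : i + 2 = n
    · obtain rfl : n = i + 2 := by omega
      simp only [jacCC, jacU, hpq', if_neg (show ¬ i + 1 = 0 by omega),
        if_neg (show ¬ i + 1 = i + 2 by omega), if_neg (show ¬ i + 1 + 1 = 0 by omega),
        if_pos (show i + 1 + 1 = i + 2 by omega), if_true]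
      rw [show i + 1 - 1 = i by omega, show i + 2 - (i + 1) = 1 by omega,
        show i + 1 + 1 - 1 = i + 1 by omega, show i + 2 - (i + 1 + 1) = 0 by omega,
        show i + 1 + 1 + 1 - 1 = i + 2 by omega, show i + 2 - (i + 1 + 1 + 1) = 0 by omega]
      linear_combination (Real.sqrt p^(i+1)) * hq2 + (Real.sqrt p^(i+1)) * hp2
        + (Real.sqrt p^(i+1)) * hpq
    · obtain ⟨d, rfl⟩ : ∃ d, n = i + 3 + d := ⟨n - (i + 3), by omega⟩
      simp only [jacCC, jacU, hpq', if_neg (show ¬ i + 1 = 0 by omega),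
        if_neg (show ¬ i + 1 = i + 3 + d by omega), if_neg (show ¬ i + 1 + 1 = 0 by omega),
        if_neg (show ¬ i + 1 + 1 = i + 3 + d by omega)]
      rw [show i + 1 - 1 = i by omega, show i + 3 + d - (i + 1) = d + 2 by omega,
        show i + 1 + 1 - 1 = i + 1 by omega, show i + 3 + d - (i + 1 + 1) = d + 1 by omega,
        show i + 1 + 1 + 1 - 1 = i + 2 by omega, show i + 3 + d - (i + 1 + 1 + 1) = d by omega]
      linear_combination (Real.sqrt p^(i+1)*Real.sqrt q^(d+1)) * hq2
        + (Real.sqrt p^(i+1)*Real.sqrt q^(d+1)) * hp2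
        + (Real.sqrt p^(i+1)*Real.sqrt q^(d+1)) * hpq

lemma jac_base0 (hn : 1 ≤ n) : Real.sqrt q * jacU p q n 1 = jacU p q n 0 := by
  obtain ⟨n', rfl⟩ : ∃ n', n = n' + 1 := ⟨n - 1, by omega⟩
  simp only [jacU]
  rw [show (1:ℕ) - 1 = 0 by omega, show n' + 1 - 1 = n' by omega,
    show n' + 1 - 0 = n' + 1 by omega]
  ring

lemma jac_basetop (hn : 1 ≤ n) : Real.sqrt p * jacU p q n n = jacU p q n (n + 1) := by
  obtain ⟨n', rfl⟩ : ∃ n', n = n' + 1 := ⟨n - 1, by omega⟩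
  simp only [jacU]
  rw [show n' + 1 - (n' + 1) = 0 by omega, show n' + 1 + 1 - 1 = n' + 1 by omega,
    show n' + 1 - (n' + 1 + 1) = 0 by omega, show n' + 1 - 1 = n' by omega]
  ring

lemma jac_pm_mulVec (hn : 1 ≤ n) (hp0 : 0 < p) (hq0 : 0 < q) (hpq : p + q = 1)
    (e : ℝ) (he : e * e = 1) :
    (jacobiM p q n).mulVec (fun i : Fin (n+2) => e ^ i.1 * jacU p q n i.1)
      = e • (fun i : Fin (n+2) => e ^ i.1 * jacU p q n i.1) := by
  have he2 : e ^ 2 = 1 := by rw [sq]; exact he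
  refine jac_mulVec_eq_of hn (fun i => e ^ i * jacU p q n i) e ?_ ?_ ?_
  · linear_combination e * jac_base0 (p := p) (q := q) (n := n) hn
  · intro k hk1 hkn
    obtain ⟨j, rfl⟩ : ∃ j, k = j + 1 := ⟨k - 1, by omega⟩
    rw [show j + 1 - 1 = j by omega]
    have hk : e ^ (j + 1 + 1) = e ^ j := by linear_combination (e^j) * he2
    have hek : e * e ^ (j + 1) = e ^ j := by linear_combination (e^j) * he2
    have base := jac_base_mid hn hp0 hq0 hpq (j+1) hk1 hkn
    rw [show j + 1 - 1 = j by omega] at base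
    linear_combination (e^j) * base
      + (jacCC p q n (j+1) * jacU p q n (j+1+1)) * hk - (jacU p q n (j+1)) * hek
  · have h : e * e ^ (n + 1) = e ^ n := by linear_combination (e^n) * he2
    linear_combination (e^n) * jac_basetop (p := p) (q := q) hn - (jacU p q n (n+1)) * h

/-! ### The interior eigenvalues -/

lemma jacF_zero : jacF p q θ 0 = Real.sin θ := by
  simp [jacF]

lemma jacF_rec (k : ℕ) (hk : 1 ≤ k) :
    jacF p q θ (k-1) + jacF p q θ (k+1) = 2 * Real.cos θ * jacF p q θ k := by
  obtain ⟨j, rfl⟩ : ∃ j, k = j + 1 := ⟨k - 1, by omega⟩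
  rw [show j + 1 - 1 = j by omega]
  simp only [jacF]
  push_cast
  rw [show (j:ℝ) * θ = ((j:ℝ)+1)*θ - θ by ring, show ((j:ℝ)+1+1)*θ = ((j:ℝ)+1)*θ + θ by ring,
    Real.sin_sub, Real.cos_sub, Real.sin_add, Real.cos_add]
  ring

lemma jacWT_h0 (hn : 1 ≤ n) (hp0 : 0 < p) (hq0 : 0 < q) (hpq : p + q = 1) :
    Real.sqrt q * jacWT p q n θ 1
      = (2 * Real.sqrt (p*q) * Real.cos θ) * jacWT p q n θ 0 := by
  have hp2 : Real.sqrt p ^ 2 = p := Real.sq_sqrt hp0.le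
  have hpq' : Real.sqrt (p * q) = Real.sqrt p * Real.sqrt q := Real.sqrt_mul hp0.le q
  rw [jacWT, jacWT, if_neg (by omega : ¬ (1:ℕ) = 0), if_neg (by omega : ¬ (1:ℕ) = n + 1),
    if_pos rfl, jacF]
  push_cast
  rw [one_mul]
  linear_combination (-(Real.sqrt q * Real.cos θ * Real.sin θ)) * hpq
    + (-2 * Real.sqrt q * Real.cos θ * Real.sin θ) * hp2
    + (-2 * Real.sqrt p * Real.cos θ * Real.sin θ) * hpq'

lemma jacWT_mid (hn : 1 ≤ n) (hp0 : 0 < p) (hq0 : 0 < q)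
    (k : ℕ) (hk1 : 1 ≤ k) (hkn : k ≤ n) :
    jacCC p q n (k-1) * jacWT p q n θ (k-1) + jacCC p q n k * jacWT p q n θ (k+1)
      = (2 * Real.sqrt (p*q) * Real.cos θ) * jacWT p q n θ k := by
  have hpq' : Real.sqrt (p * q) = Real.sqrt p * Real.sqrt q := Real.sqrt_mul hp0.le q
  have hA : jacCC p q n (k-1) * jacWT p q n θ (k-1)
      = Real.sqrt p * Real.sqrt q * jacF p q θ (k-1) := by
    rcases Nat.lt_or_ge k 2 with hk2 | hk2
    · obtain rfl : k = 1 := by omega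
      rw [show (1:ℕ) - 1 = 0 by omega, jacCC, if_pos rfl, jacWT, if_pos rfl, jacF_zero]
      ring
    · rw [jacCC, if_neg (by omega : ¬ k - 1 = 0), if_neg (by omega : ¬ k - 1 = n),
        jacWT, if_neg (by omega : ¬ k - 1 = 0), if_neg (by omega : ¬ k - 1 = n + 1), hpq']
  have hB : jacCC p q n k * jacWT p q n θ (k+1)
      = Real.sqrt p * Real.sqrt q * jacF p q θ (k+1) := by
    rcases eq_or_ne k n with rfl | hkn'
    · rw [jacCC, if_neg (by omega : ¬ k = 0), if_pos rfl, jacWT,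
        if_neg (by omega : ¬ k + 1 = 0), if_pos rfl]
      ring
    · rw [jacCC, if_neg (by omega : ¬ k = 0), if_neg hkn', jacWT,
        if_neg (by omega : ¬ k + 1 = 0), if_neg (by omega : ¬ k + 1 = n + 1), hpq']
  rw [hA, hB, show jacWT p q n θ k = jacF p q θ k from by
    rw [jacWT, if_neg (by omega : ¬ k = 0), if_neg (by omega : ¬ k = n + 1)]]
  have hrec := jacF_rec (p := p) (q := q) (θ := θ) k hk1
  linear_combination (Real.sqrt p * Real.sqrt q) * hrec
    - (2 * Real.cos θ * jacF p q θ k) * hpq'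

lemma jacWT_top (hn : 1 ≤ n) (hp0 : 0 < p) (hq0 : 0 < q) (hpq : p + q = 1)
    (hs1 : Real.sin (((n:ℝ)+1) * θ) = 0) :
    Real.sqrt p * jacWT p q n θ n
      = (2 * Real.sqrt (p*q) * Real.cos θ) * jacWT p q n θ (n+1) := by
  have hq2 : Real.sqrt q ^ 2 = q := Real.sq_sqrt hq0.le
  have hpq' : Real.sqrt (p * q) = Real.sqrt p * Real.sqrt q := Real.sqrt_mul hp0.le q
  rw [jacWT, if_neg (by omega : ¬ n = 0), if_neg (by omega : ¬ n = n + 1),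
    jacWT, if_neg (by omega : ¬ n + 1 = 0), if_pos rfl]
  simp only [jacF]
  push_cast
  rw [show (n:ℝ) * θ = ((n:ℝ)+1)*θ - θ by ring, Real.sin_sub, Real.cos_sub, hs1]
  set C := Real.cos (((n:ℝ)+1) * θ)
  linear_combination (-(Real.sqrt p * C * Real.sin θ * Real.cos θ)) * hpq
    + (-2 * Real.sqrt p * Real.cos θ * Real.sin θ * C) * hq2
    + (-2 * Real.sqrt q * Real.cos θ * Real.sin θ * C) * hpq'

end
section
variable {p q : ℝ} {n : ℕ}

lemma jac_jacU_zero_pos (hq0 : 0 < q) : 0 < jacU p q n 0 := by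
  rw [jacU, show (0:ℕ) - 1 = 0 by omega, pow_zero, one_mul]
  exact pow_pos (Real.sqrt_pos.mpr hq0) _

lemma jac_hasEigenvector (hn : 1 ≤ n) (hp0 : 0 < p) (hq0 : 0 < q) (hpq : p + q = 1)
    (m : Fin (n + 2)) :
    Module.End.HasEigenvector (Matrix.toLin' (jacobiM p q n)) (jacobiEigenvalue p q n m)
      (fun i : Fin (n+2) => jacVec p q n m i.1) := by
  have hmain : (jacobiM p q n).mulVec (fun i : Fin (n+2) => jacVec p q n m i.1)
      = jacobiEigenvalue p q n m • (fun i : Fin (n+2) => jacVec p q n m i.1) ∧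
      jacVec p q n m 0 ≠ 0 := by
    rcases eq_or_ne m.1 0 with hm0 | hm0
    · rw [show jacVec p q n m = fun i => (1:ℝ) ^ i * jacU p q n i from by
        simp [jacVec, hm0], show jacobiEigenvalue p q n m = 1 from by
        simp [jacobiEigenvalue, hm0]]
      exact ⟨jac_pm_mulVec hn hp0 hq0 hpq 1 (by norm_num), by
        simpa using (jac_jacU_zero_pos (p := p) (n := n) hq0).ne'⟩
    · rcases eq_or_ne m.1 (n+1) with hm1 | hm1
      · rw [show jacVec p q n m = fun i => (-1:ℝ) ^ i * jacU p q n i from by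
          simp [jacVec, hm0, hm1], show jacobiEigenvalue p q n m = -1 from by
          simp [jacobiEigenvalue, hm0, hm1]]
        exact ⟨jac_pm_mulVec hn hp0 hq0 hpq (-1) (by norm_num), by
          simpa using (jac_jacU_zero_pos (p := p) (n := n) hq0).ne'⟩
      · set θ := (m.1 : ℝ) * Real.pi / ((n : ℝ) + 1) with hθ
        have hm : 1 ≤ m.1 ∧ m.1 ≤ n := by have := m.2; omega
        have hn1 : ((n:ℝ) + 1) ≠ 0 := by positivity
        have hθpos : 0 < θ := by
          rw [hθ]
          have : (0:ℝ) < (m.1 : ℝ) := by exact_mod_cast hm.1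
          positivity
        have hθlt : θ < Real.pi := by
          rw [hθ, div_lt_iff₀ (by positivity)]
          have h1 : (m.1 : ℝ) < (n:ℝ) + 1 := by exact_mod_cast (by omega : m.1 < n + 1)
          nlinarith [Real.pi_pos]
        have hs1 : Real.sin (((n:ℝ)+1) * θ) = 0 := by
          have harg : ((n:ℝ)+1) * θ = (m.1:ℝ) * Real.pi := by
            rw [hθ]; field_simp
          rw [harg]
          exact Real.sin_nat_mul_pi m.1
        rw [show jacVec p q n m = jacWT p q n θ from by
          simp only [jacVec, if_neg hm0, if_neg hm1]; rfl,
          show jacobiEigenvalue p q n m = 2 * Real.sqrt (p*q) * Real.cos θ from by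
          simp only [jacobiEigenvalue, if_neg hm0, if_neg hm1]; rfl]
        refine ⟨jac_mulVec_eq_of hn (jacWT p q n θ) _ (jacWT_h0 hn hp0 hq0 hpq)
          (fun k hk1 hkn => jacWT_mid hn hp0 hq0 k hk1 hkn)
          (jacWT_top hn hp0 hq0 hpq hs1), ?_⟩
        rw [jacWT, if_pos rfl]
        exact (mul_pos (Real.sqrt_pos.mpr hp0)
          (Real.sin_pos_of_pos_of_lt_pi hθpos hθlt)).ne'
  refine ⟨Module.End.mem_eigenspace_iff.mpr ?_, ?_⟩
  · rw [Matrix.toLin'_apply]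
    exact hmain.1
  · intro h
    exact hmain.2 (by
      have := congrFun h (⟨0, by omega⟩ : Fin (n+2))
      simpa using this)

lemma jac_two_sqrt_le (hp0 : 0 < p) (hq0 : 0 < q) (hpq : p + q = 1) :
    0 < 2 * Real.sqrt (p * q) ∧ 2 * Real.sqrt (p * q) ≤ 1 := by
  have hp2 : Real.sqrt p ^ 2 = p := Real.sq_sqrt hp0.le
  have hq2 : Real.sqrt q ^ 2 = q := Real.sq_sqrt hq0.le
  have hpq' : Real.sqrt (p * q) = Real.sqrt p * Real.sqrt q := Real.sqrt_mul hp0.le q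
  constructor
  · have : 0 < Real.sqrt (p * q) := Real.sqrt_pos.mpr (mul_pos hp0 hq0)
    linarith
  · nlinarith [sq_nonneg (Real.sqrt p - Real.sqrt q)]

lemma jac_cos_bounds (hn : 1 ≤ n) (m : ℕ) (hm1 : 1 ≤ m) (hmn : m ≤ n) :
    -1 < Real.cos ((m : ℝ) * Real.pi / ((n:ℝ) + 1)) ∧
      Real.cos ((m : ℝ) * Real.pi / ((n:ℝ) + 1)) < 1 := by
  set θ := (m : ℝ) * Real.pi / ((n:ℝ) + 1) with hθ
  have hθpos : 0 < θ := by
    rw [hθ]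
    have : (0:ℝ) < (m : ℝ) := by exact_mod_cast hm1
    positivity
  have hθlt : θ < Real.pi := by
    rw [hθ, div_lt_iff₀ (by positivity)]
    have h1 : (m : ℝ) < (n:ℝ) + 1 := by exact_mod_cast (by omega : m < n + 1)
    nlinarith [Real.pi_pos]
  constructor
  · have := Real.strictAntiOn_cos (Set.mem_Icc.2 ⟨hθpos.le, hθlt.le⟩)
      (Set.mem_Icc.2 ⟨Real.pi_pos.le, le_rfl⟩) hθlt
    rwa [Real.cos_pi] at this
  · have := Real.strictAntiOn_cos (Set.mem_Icc.2 ⟨le_rfl, Real.pi_pos.le⟩)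
      (Set.mem_Icc.2 ⟨hθpos.le, hθlt.le⟩) hθpos
    rwa [Real.cos_zero] at this

lemma jac_eigen_strictAnti (hn : 1 ≤ n) (hp0 : 0 < p) (hq0 : 0 < q) (hpq : p + q = 1) :
    StrictAnti (jacobiEigenvalue p q n) := by
  obtain ⟨ha0, ha1⟩ := jac_two_sqrt_le hp0 hq0 hpq
  rw [Fin.strictAnti_iff_succ_lt]
  intro i
  simp only [jacobiEigenvalue, Fin.val_succ, Fin.coe_castSucc]
  rcases eq_or_ne i.1 0 with hi0 | hi0
  · obtain ⟨hc1, hc2⟩ := jac_cos_bounds hn 1 le_rfl hn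
    rw [hi0, if_neg (by omega), if_neg (by omega), if_pos rfl]
    norm_num at hc1 hc2 ⊢
    nlinarith [mul_pos ha0 (sub_pos.2 hc2)]
  · rcases eq_or_ne i.1 n with hin | hin
    · obtain ⟨hc1, hc2⟩ := jac_cos_bounds hn n hn le_rfl
      rw [hin, if_neg (by omega), if_pos rfl, if_neg (by omega), if_neg (by omega)]
      nlinarith [mul_pos ha0 (by linarith : (0:ℝ) <
        Real.cos ((n : ℝ) * Real.pi / ((n:ℝ) + 1)) + 1)]
    · have hi2 : i.1 < n + 1 := i.2
      rw [if_neg (by omega), if_neg (by omega), if_neg hi0, if_neg (by omega)]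
      have hb2 : ((i.1:ℝ)+1) * Real.pi / ((n:ℝ)+1) ≤ Real.pi := by
        rw [div_le_iff₀ (by positivity)]
        have : (i.1:ℝ) + 1 ≤ (n:ℝ) + 1 := by exact_mod_cast (by omega : i.1 + 1 ≤ n + 1)
        nlinarith [Real.pi_pos]
      have harg : (i.1 : ℝ) * Real.pi / ((n:ℝ)+1) < ((i.1:ℝ)+1) * Real.pi / ((n:ℝ)+1) := by
        rw [div_lt_div_iff₀ (by positivity) (by positivity)]
        nlinarith [Real.pi_pos]
      have hcos := Real.strictAntiOn_cos
        (Set.mem_Icc.2 ⟨by positivity, harg.le.trans hb2⟩)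
        (Set.mem_Icc.2 ⟨by positivity, hb2⟩) harg
      push_cast
      nlinarith [hcos]
end

/-- **Lemma (spectrum of the Jacobi matrix).** The spectrum of `J` consists exactly of the
`n+2` pairwise distinct real numbers `λ_0 = 1`, `λ_m = 2√(pq)·cos(mπ/(n+1))`
(`m = 1,…,n`), and `λ_{n+1} = -1`. -/
theorem jacobiM_spectrum (n : ℕ) (hn : 1 ≤ n)
    (p q : ℝ) (hp0 : 0 < p) (hp1 : p < 1) (hq0 : 0 < q) (hq1 : q < 1) (hpq : p + q = 1) :
    spectrum ℝ (jacobiM p q n) = Set.range (jacobiEigenvalue p q n) ∧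
      Function.Injective (jacobiEigenvalue p q n) := by
  have hinj : Function.Injective (jacobiEigenvalue p q n) :=
    (jac_eigen_strictAnti hn hp0 hq0 hpq).injective
  refine ⟨?_, hinj⟩
  have hETL : spectrum ℝ (jacobiM p q n)
      = spectrum ℝ (Matrix.toLin' (jacobiM p q n)) := by
    rw [← AlgEquiv.spectrum_eq
      (Matrix.toLinAlgEquiv' : Matrix (Fin (n+2)) (Fin (n+2)) ℝ ≃ₐ[ℝ] _) (jacobiM p q n)]
    rfl
  rw [hETL]
  ext μ
  rw [← Module.End.hasEigenvalue_iff_mem_spectrum]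
  constructor
  · intro hμ
    by_contra hne
    simp only [Set.mem_range, not_exists] at hne
    obtain ⟨x, hx⟩ := hμ.exists_hasEigenvector
    have hvinj : Function.Injective
        (fun o : Option (Fin (n+2)) => o.elim μ (jacobiEigenvalue p q n)) := by
      rintro (_|a) (_|b) hab
      · rfl
      · exact absurd hab.symm (hne b)
      · exact absurd hab (hne a)
      · exact congrArg some (hinj hab)
    have hLI := Module.End.eigenvectors_linearIndependent' (Matrix.toLin' (jacobiM p q n))
      (fun o : Option (Fin (n+2)) => o.elim μ (jacobiEigenvalue p q n)) hvinj
      (fun o => o.elim x (fun m => fun i : Fin (n+2) => jacVec p q n m i.1))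
      (by
        rintro (_|m)
        · exact hx
        · exact jac_hasEigenvector hn hp0 hq0 hpq m)
    have hcard := hLI.fintype_card_le_finrank
    rw [Module.finrank_fintype_fun_eq_card] at hcard
    simp [Fintype.card_option] at hcard
  · rintro ⟨m, rfl⟩
    exact Module.End.hasEigenvalue_of_hasEigenvector (jac_hasEigenvector hn hp0 hq0 hpq m)
end

section
/- The vector w ∈ ℝ^{n+2} with components w(0) = 1, w(j) = (1/√q)·(√(p/q))^{j−1} for 1 ≤ j ≤ n, and w(n+1) = (√(p/q))^n satisfies J w = w; i.e., w is an eigenvector of J for the eigenvalue 1. -/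
open Filter Finset

/-- The vector `w` with `w(0) = 1`, `w(j) = (1/√q)·(√(p/q))^(j-1)` for `1 ≤ j ≤ n`,
and `w(n+1) = (√(p/q))^n`. -/
noncomputable def wVec (p q : ℝ) (n : ℕ) : Fin (n + 2) → ℝ :=
  fun j =>
    if j.1 = 0 then 1
    else if j.1 = n + 1 then (Real.sqrt (p / q)) ^ n
    else (1 / Real.sqrt q) * (Real.sqrt (p / q)) ^ (j.1 - 1)

/-- **Lemma.** `w` is an eigenvector of the Jacobi matrix `J` for the eigenvalue `1`:
`J w = w`. -/
theorem jacobiM_mulVec_wVec (n : ℕ) (hn : 1 ≤ n)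
    (p q : ℝ) (hp0 : 0 < p) (hp1 : p < 1) (hq0 : 0 < q) (hq1 : q < 1) (hpq : p + q = 1) :
    (jacobiM p q n).mulVec (wVec p q n) = wVec p q n := by
  have hsp : (0:ℝ) < Real.sqrt p := Real.sqrt_pos.mpr hp0
  have hsq : (0:ℝ) < Real.sqrt q := Real.sqrt_pos.mpr hq0
  have hs2 : Real.sqrt p ^ 2 = p := Real.sq_sqrt hp0.le
  have ht2 : Real.sqrt q ^ 2 = q := Real.sq_sqrt hq0.le
  have hmul : Real.sqrt (p * q) = Real.sqrt p * Real.sqrt q := Real.sqrt_mul hp0.le q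
  have hdiv : Real.sqrt (p / q) = Real.sqrt p / Real.sqrt q := Real.sqrt_div hp0.le q
  have hst : Real.sqrt p ^ 2 + Real.sqrt q ^ 2 = 1 := by rw [hs2, ht2]; exact hpq
  funext k
  obtain ⟨k, hk⟩ := k
  simp only [Matrix.mulVec, dotProduct]
  by_cases h0 : k = 0
  · subst h0
    rw [Fintype.sum_eq_single (⟨1, by omega⟩ : Fin (n+2))]
    · simp only [jacobiM, wVec, hdiv]
      norm_num [show (1:ℕ) ≠ n + 1 by omega]
      rw [if_neg (by omega)]
      exact mul_inv_cancel₀ hsq.ne'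
    · intro b hb
      have hb1 : b.1 ≠ 1 := fun h => hb (Fin.ext h)
      simp only [jacobiM]
      rw [if_neg (by omega), if_neg (by omega), zero_mul]
  · by_cases hN : k = n + 1
    · subst hN
      rw [Fintype.sum_eq_single (⟨n, by omega⟩ : Fin (n+2))]
      · simp only [jacobiM, wVec, hdiv]
        norm_num [show n ≠ 0 by omega, show n ≠ n + 1 by omega, show ¬ (n+1+1 = n) by omega,
          show (n:ℕ)+1 ≠ 0 by omega]
        obtain ⟨m, rfl⟩ : ∃ m, n = m + 1 := ⟨n - 1, by omega⟩
        simp only [Nat.add_sub_cancel, pow_succ]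
        field_simp
      · intro b hb
        have hb1 : b.1 ≠ n := fun h => hb (Fin.ext h)
        simp only [jacobiM]
        rw [if_neg (by omega), if_neg (by omega), zero_mul]
    · have hk1 : 1 ≤ k := by omega
      have hkn : k ≤ n := by omega
      rw [Finset.sum_eq_add (⟨k-1, by omega⟩ : Fin (n+2)) (⟨k+1, by omega⟩ : Fin (n+2))
          (Fin.ne_of_val_ne (show k-1 ≠ k+1 by omega))
          ?_ (by simp) (by simp)]
      · obtain ⟨j, rfl⟩ : ∃ j, k = j + 1 := ⟨k - 1, by omega⟩
        simp only [Nat.add_sub_cancel]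
        by_cases hj0 : j = 0
        · subst hj0
          by_cases hn1 : n = 1
          · subst hn1
            simp only [jacobiM, wVec, hdiv, hmul]
            norm_num
            field_simp
            linear_combination hpq + ht2 + hs2
          · simp only [jacobiM, wVec, hdiv, hmul]
            norm_num [show n ≠ 1 by omega, show (1:ℕ) ≠ n by omega, show (2:ℕ) ≠ n + 1 by omega,
              show (1:ℕ) ≠ n + 1 by omega, show (2:ℕ) ≠ 0 by omega, show n ≠ 0 by omega]
            field_simp
            linear_combination hst
        · obtain ⟨i, rfl⟩ : ∃ i, j = i + 1 := ⟨j - 1, by omega⟩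
          have hij : i + 2 ≤ n := by omega
          by_cases hkn' : i + 2 = n
          · subst hkn'
            simp only [jacobiM, wVec, hdiv, hmul]
            norm_num [show i + 1 ≠ i + 2 by omega, show ¬ (i+2+1+1 = i+2) by omega,
              show i + 1 ≠ i + 2 + 1 by omega, show i + 2 ≠ i + 2 + 1 by omega,
              show i + 1 + 1 ≠ i by omega]
            simp only [pow_succ]
            field_simp
            ring_nf
            linear_combination hst
          · have hlt : i + 2 < n := by omega
            simp only [jacobiM, wVec, hdiv, hmul]
            norm_num [show i + 1 ≠ n by omega, show i + 2 ≠ n by omega,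
              show i + 1 ≠ n + 1 by omega, show i + 2 ≠ n + 1 by omega,
              show i + 3 ≠ n + 1 by omega, show i + 2 + 1 ≠ n + 1 by omega,
              show i + 2 + 1 ≠ 0 by omega, show i ≠ n by omega]
            simp only [show i+1+1 = i+2 from rfl, pow_succ]
            field_simp
            ring_nf
            linear_combination hst
      · intro c _ hc
        have h1 : c.1 ≠ k - 1 := fun h => hc.1 (Fin.ext h)
        have h2 : c.1 ≠ k + 1 := fun h => hc.2 (Fin.ext h)
        simp only [jacobiM]
        rw [if_neg (by omega), if_neg (by omega), zero_mul]
end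

section
/- The vector w' ∈ ℝ^{n+2} with components w'(j) = (−1)^j · w(j), where w(0) = 1, w(j) = (1/√q)·(√(p/q))^{j−1} for 1 ≤ j ≤ n, and w(n+1) = (√(p/q))^n, satisfies J w' = −w'; i.e., w' is an eigenvector of J for the eigenvalue −1. -/
open Filter Finset

/-- The alternating-sign vector `w'(j) = (-1)^j · w(j)`. -/
noncomputable def wVec' (p q : ℝ) (n : ℕ) : Fin (n + 2) → ℝ :=
  fun j => (-1 : ℝ) ^ j.1 * wVec p q n j

/-- **Lemma.** `w'` is an eigenvector of the Jacobi matrix `J` for the eigenvalue `-1`: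
`J w' = -w'`. -/
theorem jacobiM_mulVec_wVec' (n : ℕ) (hn : 1 ≤ n)
    (p q : ℝ) (hp0 : 0 < p) (hp1 : p < 1) (hq0 : 0 < q) (hq1 : q < 1) (hpq : p + q = 1) :
    (jacobiM p q n).mulVec (wVec' p q n) = -wVec' p q n := by
  have hsq : Real.sqrt q ≠ 0 := (Real.sqrt_pos.mpr hq0).ne'
  have hsp : Real.sqrt p ≠ 0 := (Real.sqrt_pos.mpr hp0).ne'
  have hq2 : Real.sqrt q ^ 2 = q := Real.sq_sqrt hq0.le
  have hp2 : Real.sqrt p ^ 2 = p := Real.sq_sqrt hp0.le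
  have hr : Real.sqrt (p / q) = Real.sqrt p / Real.sqrt q := Real.sqrt_div hp0.le q
  have hm : Real.sqrt (p * q) = Real.sqrt p * Real.sqrt q := Real.sqrt_mul hp0.le q
  funext k
  simp only [Matrix.mulVec, dotProduct, Pi.neg_apply]
  obtain ⟨k, hk⟩ := k
  rcases Nat.lt_or_ge k 1 with h0 | h1
  · -- k = 0
    have hk0 : k = 0 := by omega
    subst hk0
    rw [Finset.sum_eq_single_of_mem (⟨1, by omega⟩ : Fin (n+2)) (mem_univ _)]
    · have h1n : (1:ℕ) ≠ n + 1 := by omega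
      simp only [jacobiM, wVec', wVec, h1n]
      norm_num
      field_simp
    · intro c _ hc
      have hc1 : c.1 ≠ 1 := fun h => hc (Fin.ext h)
      simp only [jacobiM]
      rw [if_neg (by omega), if_neg (by omega), zero_mul]
  rcases Nat.lt_or_ge k (n+1) with h2 | h3
  swap
  · -- k = n+1
    have hk0 : k = n + 1 := by omega
    subst hk0
    rw [Finset.sum_eq_single_of_mem (⟨n, by omega⟩ : Fin (n+2)) (mem_univ _)]
    · have e1 : ¬ (n + 1 + 1 = n) := by omega
      have e2 : n ≠ 0 := by omega
      have e3 : n ≠ n + 1 := by omega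
      simp only [jacobiM, wVec', wVec, if_neg e1, if_pos rfl, if_neg e2, if_neg e3]
      obtain ⟨m, rfl⟩ : ∃ m, n = m + 1 := ⟨n - 1, by omega⟩
      simp only [Nat.add_sub_cancel, pow_succ, hr]
      simp only [if_true, show m + 1 + 1 ≠ 0 by omega, if_false]
      field_simp
    · intro c _ hc
      have hc1 : c.1 ≠ n := fun h => hc (Fin.ext h)
      have hcle : c.1 < n + 2 := c.2
      simp only [jacobiM]
      rw [if_neg (by omega), if_neg (by omega), zero_mul]
  · -- 1 ≤ k ≤ n
    obtain ⟨j, rfl⟩ : ∃ j, k = j + 1 := ⟨k - 1, by omega⟩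
    have hjn : j + 1 ≤ n := by omega
    rw [Finset.sum_eq_add_of_mem (⟨j, by omega⟩ : Fin (n+2)) (⟨j+2, by omega⟩ : Fin (n+2))
        (mem_univ _) (mem_univ _) (Fin.ne_of_val_ne (by simp)) ?_]
    swap
    · intro c _ hc
      have hc1 : c.1 ≠ j := fun h => hc.1 (Fin.ext h)
      have hc2 : c.1 ≠ j + 2 := fun h => hc.2 (Fin.ext h)
      simp only [jacobiM]
      rw [if_neg (by omega), if_neg (by omega), zero_mul]
    have hJ1 : ¬ (j + 1 + 1 = j) := by omega
    have hJ2 : (j + 1 + 1 = j + 2) := by omega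
    have hj1n : j + 1 ≠ 0 := by omega
    have hjnn : j ≠ n := by omega
    have hw1 : j + 1 ≠ n + 1 := by omega
    simp only [jacobiM, wVec', wVec, if_neg hJ1, if_pos rfl, if_pos hJ2, if_neg hj1n,
      if_neg hjnn, if_neg hw1]
    rcases Nat.eq_zero_or_pos j with hj0 | hj1
    · subst hj0
      rcases eq_or_ne n 1 with hn1 | hn1
      · subst hn1
        norm_num [hr]
        field_simp
        linear_combination hq2 + hp2 + hpq
      · have e : ¬ ((0:ℕ) + 1 = n) := by omega
        have e2 : (2:ℕ) ≠ n + 1 := by omega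
        have e3 : (2:ℕ) ≠ 0 := by omega
        simp only [if_neg e, if_neg e2, if_neg e3]
        norm_num [hr, hm]
        field_simp
        linear_combination hq2 + hp2 + hpq
    · obtain ⟨i, rfl⟩ : ∃ i, j = i + 1 := ⟨j - 1, by omega⟩
      have hi0 : i + 1 ≠ 0 := by omega
      have hin1 : i + 1 ≠ n + 1 := by omega
      simp only [if_neg hi0, if_neg hin1, Nat.add_sub_cancel]
      rcases eq_or_ne (i + 2) n with hn2 | hn2
      · -- j + 1 = n : right neighbor is n+1
        have e1 : i + 1 + 1 = n := hn2
        have e2 : i + 3 = n + 1 := by omega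
        simp only [if_pos e1, if_pos e2, ← hn2]
        simp only [pow_succ, hr, hm]
        set X := (Real.sqrt p / Real.sqrt q) ^ i with hX
        set S := ((-1 : ℝ)) ^ i with hS
        simp only [if_true, show i + 1 + 2 ≠ 0 by omega, if_false]
        field_simp
        linear_combination (-(S * X)) * (hq2 + hp2 + hpq)
      · have e1 : ¬ (i + 1 + 1 = n) := hn2
        have e2 : i + 3 ≠ n + 1 := by omega
        have e3 : i + 3 ≠ 0 := by omega
        simp only [if_neg e1, if_neg e2, if_neg e3, Nat.add_sub_cancel]
        simp only [pow_succ, hr, hm]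
        set X := (Real.sqrt p / Real.sqrt q) ^ i with hX
        set S := ((-1 : ℝ)) ^ i with hS
        have hbi : Real.sqrt q ^ i * (Real.sqrt q)⁻¹ ^ i = 1 := by
          rw [← mul_pow, mul_inv_cancel₀ hsq, one_pow]
        simp only [if_true, show i + 1 + 2 - 1 = i + 2 by omega, pow_succ, ← hX]
        field_simp
        linear_combination (-(S * X)) * (hq2 + hp2 + hpq)
end

section
/- For all real λ, det(λ·I_{n+2} − J) = (λ² − 1) · (√(pq))^n · U_n(λ/(2√(pq))), where U_n is the degree-n Chebyshev polynomial of the second kind (characterized by U_n(cos θ) = sin((n+1)θ)/sin θ). In particular, the characteristic polynomial of J factors as (λ² − 1) times a polynomial whose roots are 2√(pq)·cos(mπ/(n+1)), m = 1,…,n. -/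
open Filter Finset

noncomputable def tri (d a b : ℕ → ℝ) : (m : ℕ) → Matrix (Fin m) (Fin m) ℝ :=
  fun _ i j => if i.1 = j.1 then d i.1 else if i.1 + 1 = j.1 then a i.1
    else if j.1 + 1 = i.1 then b j.1 else 0

lemma tri_apply (d a b : ℕ → ℝ) (m : ℕ) (i j : Fin m) :
    tri d a b m i j = if i.1 = j.1 then d i.1 else if i.1 + 1 = j.1 then a i.1
    else if j.1 + 1 = i.1 then b j.1 else 0 := rfl

lemma succAbove_last_val (m : ℕ) (j : Fin (m+1)) :
    ((((Fin.last m).castSucc).succAbove j) : ℕ) = if j.1 < m then j.1 else m + 1 := by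
  have hj := j.isLt
  rw [Fin.succAbove]
  by_cases h : (j.castSucc < (Fin.last m).castSucc)
  · have h' : j.1 < m := by simpa [Fin.lt_def, Fin.coe_castSucc, Fin.val_last] using h
    rw [if_pos h, if_pos h', Fin.coe_castSucc]
  · have h' : ¬ j.1 < m := by simpa [Fin.lt_def, Fin.coe_castSucc, Fin.val_last] using h
    rw [if_neg h, if_neg h', Fin.val_succ]
    omega

lemma tri_rec (d a b : ℕ → ℝ) (m : ℕ) :
    (tri d a b (m+2)).det =
      d (m+1) * (tri d a b (m+1)).det - a m * b m * (tri d a b m).det := by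
  rw [Matrix.det_succ_row (tri d a b (m+2)) (Fin.last (m+1))]
  rw [Fin.sum_univ_castSucc, Fin.sum_univ_castSucc]
  have h0 : ∀ j : Fin m, tri d a b (m+2) (Fin.last (m+1)) ((j.castSucc).castSucc) = 0 := by
    intro j
    have hj := j.isLt
    rw [tri_apply]
    split_ifs <;> first | rfl | (exfalso; simp only [Fin.val_last, Fin.coe_castSucc] at *; omega)
  rw [Finset.sum_eq_zero (fun j _ => by rw [h0 j]; ring), zero_add]
  have hdiag : tri d a b (m+2) (Fin.last (m+1)) (Fin.last (m+1)) = d (m+1) := by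
    rw [tri_apply]; simp
  have hsub : tri d a b (m+2) (Fin.last (m+1)) ((Fin.last m).castSucc) = b m := by
    rw [tri_apply]
    simp only [Fin.val_last, Fin.coe_castSucc]
    split_ifs <;> first | rfl | omega
  have hsign1 : ((-1 : ℝ)) ^ ((Fin.last (m+1)).1 + ((Fin.last m).castSucc).1) = -1 := by
    simp only [Fin.val_last, Fin.coe_castSucc]
    have : m + 1 + m = 2*m + 1 := by ring
    rw [this, pow_succ, pow_mul]
    norm_num
  have hsign2 : ((-1 : ℝ)) ^ ((Fin.last (m+1)).1 + (Fin.last (m+1)).1) = 1 := by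
    simp only [Fin.val_last]
    have : m + 1 + (m + 1) = 2*(m+1) := by ring
    rw [this, pow_mul]
    norm_num
  have hM1 : ((tri d a b (m + 2)).submatrix (Fin.last (m + 1)).succAbove
      (Fin.last (m + 1)).succAbove) = tri d a b (m+1) := by
    ext i j
    rw [Fin.succAbove_last, Matrix.submatrix_apply, tri_apply, tri_apply]
    rfl
  have hM2 : ((tri d a b (m + 2)).submatrix (Fin.last (m + 1)).succAbove
      ((Fin.last m).castSucc).succAbove).det = a m * (tri d a b m).det := by
    set N := ((tri d a b (m + 2)).submatrix (Fin.last (m + 1)).succAbove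
      ((Fin.last m).castSucc).succAbove) with hN
    rw [Matrix.det_succ_column N (Fin.last m)]
    rw [Fin.sum_univ_castSucc]
    have hz : ∀ i : Fin m, N (i.castSucc) (Fin.last m) = 0 := by
      intro i
      have hi := i.isLt
      rw [hN, Matrix.submatrix_apply, Fin.succAbove_last, tri_apply]
      have hv := succAbove_last_val m (Fin.last m)
      simp only [Fin.val_last, lt_irrefl, if_false] at hv
      rw [hv]
      simp only [Fin.coe_castSucc]
      split_ifs <;> first | rfl | (exfalso; omega)
    rw [Finset.sum_eq_zero (fun i _ => by rw [hz i]; ring), zero_add]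
    have hval : N (Fin.last m) (Fin.last m) = a m := by
      rw [hN, Matrix.submatrix_apply, Fin.succAbove_last, tri_apply]
      have hv := succAbove_last_val m (Fin.last m)
      simp only [Fin.val_last, lt_irrefl, if_false] at hv
      rw [hv]
      simp only [Fin.coe_castSucc, Fin.val_last]
      split_ifs <;> first | rfl | omega
    have hsign : ((-1 : ℝ)) ^ ((Fin.last m).1 + (Fin.last m).1) = 1 := by
      simp only [Fin.val_last]
      have : m + m = 2*m := by ring
      rw [this, pow_mul]; norm_num
    have hMM : N.submatrix (Fin.last m).succAbove (Fin.last m).succAbove = tri d a b m := by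
      ext i j
      have hj := j.isLt
      rw [Fin.succAbove_last, Matrix.submatrix_apply, hN, Matrix.submatrix_apply,
        Fin.succAbove_last, tri_apply, tri_apply]
      have hv := succAbove_last_val m (j.castSucc)
      simp only [Fin.coe_castSucc, hj, if_pos] at hv
      rw [hv]
      rfl
    rw [hval, hsign, hMM]
    ring
  rw [hdiag, hsub, hsign1, hsign2, hM1, hM2]
  ring

noncomputable def chebD (s x : ℝ) (k : ℤ) : ℝ :=
  s ^ k.toNat * (Polynomial.Chebyshev.U ℝ k).eval x

lemma chebD_neg_one (s x : ℝ) : chebD s x (-1) = 0 := by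
  simp [chebD, Polynomial.Chebyshev.U_neg_one]

lemma chebD_zero (s x : ℝ) : chebD s x 0 = 1 := by
  simp [chebD, Polynomial.Chebyshev.U_zero]

lemma chebD_one (s x : ℝ) : chebD s x 1 = 2 * s * x := by
  simp [chebD, Polynomial.Chebyshev.U_one]
  ring

lemma chebD_rec (s x : ℝ) (j : ℕ) :
    chebD s x ((j : ℤ) + 1) = (2 * s * x) * chebD s x j - s ^ 2 * chebD s x ((j : ℤ) - 1) := by
  cases j with
  | zero =>
      simp only [Nat.cast_zero, zero_add, zero_sub]
      rw [chebD_one, chebD_zero, chebD_neg_one]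
      ring
  | succ i =>
      have h1 : ((i + 1 : ℕ) : ℤ) + 1 = (i : ℤ) + 2 := by push_cast; ring
      have h2 : ((i + 1 : ℕ) : ℤ) - 1 = (i : ℤ) := by push_cast; ring
      rw [h1, h2]
      have hU := Polynomial.Chebyshev.U_add_two ℝ (i : ℤ)
      have t1 : ((i : ℤ) + 2).toNat = i + 2 := by omega
      have t2 : ((i : ℤ) + 1).toNat = i + 1 := by omega
      have t3 : ((i : ℤ)).toNat = i := by omega
      have hc : ((i + 1 : ℕ) : ℤ) = (i : ℤ) + 1 := by push_cast; ring
      simp only [chebD, hU, hc, t1, t2, t3, Polynomial.eval_sub, Polynomial.eval_mul,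
        Polynomial.eval_ofNat, Polynomial.eval_X]
      ring

/-- **Lemma (characteristic polynomial of the Jacobi matrix).** For all real `λ`,
`det(λ·I_{n+2} - J) = (λ² - 1)·(√(pq))^n·U_n(λ/(2√(pq)))`, where `U_n` is the degree-`n`
Chebyshev polynomial of the second kind. -/
theorem det_charMatrix_jacobiM (n : ℕ) (hn : 1 ≤ n)
    (p q : ℝ) (hp0 : 0 < p) (hp1 : p < 1) (hq0 : 0 < q) (hq1 : q < 1) (hpq : p + q = 1) :
    ∀ lam : ℝ,
      (lam • (1 : Matrix (Fin (n + 2)) (Fin (n + 2)) ℝ) - jacobiM p q n).det =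
        (lam ^ 2 - 1) * (Real.sqrt (p * q)) ^ n *
          (Polynomial.Chebyshev.U ℝ (n : ℤ)).eval (lam / (2 * Real.sqrt (p * q))) := by
  intro lam
  set s := Real.sqrt (p * q) with hsdef
  have hs : 0 < s := Real.sqrt_pos.mpr (mul_pos hp0 hq0)
  have hs2 : s ^ 2 = p * q := Real.sq_sqrt (le_of_lt (mul_pos hp0 hq0))
  set x := lam / (2 * s) with hxdef
  have hx : 2 * s * x = lam := by
    rw [hxdef]; field_simp
  set c : ℕ → ℝ := fun i => if i = 0 then Real.sqrt q else if i = n then Real.sqrt p else s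
    with hc
  set B : ℕ → ℝ := fun k => (tri (fun _ => lam) (fun i => -(c i)) (fun i => -(c i)) k).det
    with hB
  have hM : lam • (1 : Matrix (Fin (n + 2)) (Fin (n + 2)) ℝ) - jacobiM p q n =
      tri (fun _ => lam) (fun i => -(c i)) (fun i => -(c i)) (n + 2) := by
    ext k l
    rw [tri_apply]
    simp only [Matrix.sub_apply, Matrix.smul_apply, Matrix.one_apply, jacobiM, smul_eq_mul,
      hc, Fin.ext_iff]
    split_ifs <;> first | ring1 | (exfalso; omega)
  have hB0 : B 0 = 1 := Matrix.det_fin_zero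
  have hB1 : B 1 = lam := by
    simp only [hB]
    rw [Matrix.det_fin_one, tri_apply]
    norm_num
  have hBrec : ∀ k : ℕ, B (k + 2) = lam * B (k + 1) - (c k) ^ 2 * B k := by
    intro k
    simp only [hB]
    rw [tri_rec]
    ring
  set D : ℤ → ℝ := chebD s x with hD
  have hDrec : ∀ j : ℕ, D ((j : ℤ) + 1) = lam * D j - (p * q) * D ((j : ℤ) - 1) := by
    intro j
    rw [hD, chebD_rec s x j, hx, hs2]
  have key : ∀ k : ℕ, 1 ≤ k → k ≤ n + 1 → B k = D k - q ^ 2 * D ((k : ℤ) - 2) := by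
    intro k
    induction k using Nat.strong_induction_on with
    | _ k ih =>
      match k with
      | 0 => omega
      | 1 =>
        intro _ _
        have e : ((1 : ℕ) : ℤ) - 2 = -1 := by norm_num
        rw [e, hD, chebD_neg_one]
        have e1 : ((1 : ℕ) : ℤ) = 1 := by norm_num
        rw [e1, chebD_one, hx, hB1]
        ring
      | 2 =>
        intro _ _
        have hc0 : c 0 = Real.sqrt q := by simp [hc]
        have hq2 : (c 0) ^ 2 = q := by rw [hc0]; exact Real.sq_sqrt (le_of_lt hq0)
        have h2 : B 2 = lam * B 1 - (c 0) ^ 2 * B 0 := hBrec 0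
        have hD2 := hDrec 1
        have f1 : ((1 : ℕ) : ℤ) + 1 = ((2 : ℕ) : ℤ) := by norm_num
        have f2 : ((1 : ℕ) : ℤ) - 1 = (0 : ℤ) := by norm_num
        have f3 : ((1 : ℕ) : ℤ) = (1 : ℤ) := by norm_num
        rw [f1, f2, f3] at hD2
        have f4 : ((2 : ℕ) : ℤ) - 2 = (0 : ℤ) := by norm_num
        rw [f4, h2, hB1, hB0, hq2, hD2, hD, chebD_zero, chebD_one, hx]
        linear_combination q * hpq
      | (j + 3) =>
        intro _ hle
        have hcj : c (j + 1) = s := by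
          have u1 : j + 1 ≠ 0 := by omega
          have u2 : j + 1 ≠ n := by omega
          simp [hc, u1, u2]
        have hrec := hBrec (j + 1)
        rw [hcj] at hrec
        have ih2 := ih (j + 2) (by omega) (by omega) (by omega)
        have ih1 := ih (j + 1) (by omega) (by omega) (by omega)
        have e2 := hDrec (j + 2)
        have e1 := hDrec j
        have a1 : ((j + 2 : ℕ) : ℤ) + 1 = ((j + 3 : ℕ) : ℤ) := by push_cast; ring
        have a2 : ((j + 2 : ℕ) : ℤ) - 1 = ((j + 1 : ℕ) : ℤ) := by push_cast; ring
        have a3 : ((j : ℕ) : ℤ) + 1 = ((j + 1 : ℕ) : ℤ) := by push_cast; ring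
        have a4 : ((j + 2 : ℕ) : ℤ) - 2 = ((j : ℕ) : ℤ) := by push_cast; ring
        have a5 : ((j + 1 : ℕ) : ℤ) - 2 = ((j : ℕ) : ℤ) - 1 := by push_cast; ring
        have a6 : ((j + 3 : ℕ) : ℤ) - 2 = ((j + 1 : ℕ) : ℤ) := by push_cast; ring
        rw [a1, a2] at e2
        rw [a3] at e1
        rw [a4] at ih2
        rw [a5] at ih1
        rw [a6]
        rw [hs2] at hrec
        linear_combination hrec - e2 + lam * ih2 - p * q * ih1 + q ^ 2 * e1
  have hfin : B (n + 2) = lam * B (n + 1) - p * B n := by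
    have h0 : n ≠ 0 := by omega
    have hcn : c n = Real.sqrt p := by simp [hc, h0]
    have hp2 : (c n) ^ 2 = p := by rw [hcn]; exact Real.sq_sqrt (le_of_lt hp0)
    have := hBrec n
    rw [hp2] at this
    exact this
  have k1 := key (n + 1) (by omega) (by omega)
  have k2 := key n (by omega) (by omega)
  have h3 := hDrec n
  have h4 := hDrec (n - 1)
  have b1 : ((n + 1 : ℕ) : ℤ) = (n : ℤ) + 1 := by push_cast; ring
  have b2 : (n : ℤ) + 1 - 2 = (n : ℤ) - 1 := by ring
  have b3 : ((n - 1 : ℕ) : ℤ) = (n : ℤ) - 1 := by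
    have h1 : (1 : ℕ) ≤ n := hn
    push_cast [h1]
    ring
  rw [b1, b2] at k1
  rw [b3] at h4
  have b4 : (n : ℤ) - 1 + 1 = (n : ℤ) := by ring
  have b5 : (n : ℤ) - 1 - 1 = (n : ℤ) - 2 := by ring
  rw [b4, b5] at h4
  have hgoal : (lam • (1 : Matrix (Fin (n + 2)) (Fin (n + 2)) ℝ) - jacobiM p q n).det
      = B (n + 2) := by
    rw [hM]
  rw [hgoal, hfin]
  have hDn : (lam ^ 2 - 1) * s ^ n * (Polynomial.Chebyshev.U ℝ (n : ℤ)).eval x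
      = (lam ^ 2 - 1) * D (n : ℤ) := by
    have tn : ((n : ℤ)).toNat = n := by omega
    simp only [hD, chebD, tn]
    ring
  rw [hDn]
  linear_combination lam * k1 - p * k2 + lam * h3 + (q * (p + q)) * h4
    - ((1 + q) * D (n : ℤ) + p * q ^ 2 * D ((n : ℤ) - 2)) * hpq
end

section
/- Assume p ≠ q. For every integer k ≥ 1 and for λ ∈ {1, −1}, det(λ·I_k − √(pq)·A_k) = λ^k · (p^{k+1} − q^{k+1})/(p − q), where A_k is the adjacency matrix of the path graph on k vertices. -/
open Finset

/-- The adjacency matrix of the path graph on `k` vertices. -/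
def pathAdj (k : ℕ) : Matrix (Fin k) (Fin k) ℝ :=
  fun i j => if i.1 + 1 = j.1 ∨ j.1 + 1 = i.1 then 1 else 0

noncomputable def Tmat (a b : ℝ) (n : ℕ) : Matrix (Fin n) (Fin n) ℝ :=
  fun i j => if (i : ℕ) = j then a else if (i:ℕ) + 1 = j ∨ (j:ℕ) + 1 = i then b else 0

lemma Tmat_submatrix (a b : ℝ) (n : ℕ) :
    (Tmat a b (n+1)).submatrix Fin.succ Fin.succ = Tmat a b n := by
  ext i j
  simp only [Matrix.submatrix_apply, Tmat, Fin.val_succ]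
  congr 1 <;> [skip; congr 1] <;> simp

lemma succAbove_one (n : ℕ) (j : Fin (n+1)) :
    ((1 : Fin (n+3)).succAbove j.succ) = j.succ.succ := by
  have : (1 : Fin (n+3)) = (0 : Fin (n+2)).succ := rfl
  rw [this, Fin.succ_succAbove_succ, Fin.succAbove_zero]

lemma Tmat_minor (a b : ℝ) (n : ℕ) :
    ((Tmat a b (n+2)).submatrix Fin.succ ((1 : Fin (n+2)).succAbove)).det
      = b * (Tmat a b n).det := by
  cases n with
  | zero =>
    simp [Matrix.det_fin_one, Matrix.submatrix_apply, Tmat]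
  | succ m =>
    rw [Matrix.det_succ_column_zero, Fin.sum_univ_succ]
    have hz : ∀ i : Fin (m+1), ((Tmat a b (m+3)).submatrix Fin.succ
        ((1 : Fin (m+3)).succAbove)) i.succ 0 = 0 := by
      intro i
      have : ((1 : Fin (m+3)).succAbove 0) = 0 := rfl
      simp only [Matrix.submatrix_apply, this, Tmat, Fin.val_succ, Fin.val_zero]
      split_ifs <;> simp_all <;> omega
    simp only [hz, zero_mul, mul_zero, Finset.sum_const_zero, add_zero]
    have h00 : ((Tmat a b (m+3)).submatrix Fin.succ
        ((1 : Fin (m+3)).succAbove)) 0 0 = b := by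
      have : ((1 : Fin (m+3)).succAbove 0) = 0 := rfl
      simp [Matrix.submatrix_apply, this, Tmat]
    rw [h00]
    have hsub : (((Tmat a b (m+3)).submatrix Fin.succ
        ((1 : Fin (m+3)).succAbove)).submatrix ((0 : Fin (m+2)).succAbove) Fin.succ)
        = Tmat a b (m+1) := by
      ext i j
      simp only [Matrix.submatrix_apply, Fin.succAbove_zero, succAbove_one,
        Tmat, Fin.val_succ]
      congr 1 <;> [skip; congr 1] <;> simp <;> omega
    rw [hsub]
    norm_num

lemma Tmat_det_zero (a b : ℝ) : (Tmat a b 0).det = 1 := Matrix.det_fin_zero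

lemma Tmat_det_one (a b : ℝ) : (Tmat a b 1).det = a := by
  simp [Matrix.det_fin_one, Tmat]

lemma Tmat_rec (a b : ℝ) (n : ℕ) :
    (Tmat a b (n+2)).det = a * (Tmat a b (n+1)).det - b^2 * (Tmat a b n).det := by
  rw [Matrix.det_succ_row_zero, Fin.sum_univ_succ, Fin.sum_univ_succ]
  have h0 : ∀ j : Fin n, Tmat a b (n+2) 0 j.succ.succ = 0 := by
    intro j; simp [Tmat]
  simp only [h0, mul_zero, zero_mul, Finset.sum_const_zero, add_zero]
  have ha : Tmat a b (n+2) 0 0 = a := by simp [Tmat]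
  have hb : Tmat a b (n+2) 0 ((0 : Fin (n+1)).succ) = b := by
    simp [Tmat]
  rw [ha, hb, Fin.succAbove_zero, Tmat_submatrix]
  have : ((0 : Fin (n+1)).succ) = (1 : Fin (n+2)) := rfl
  rw [this, Tmat_minor]
  simp only [Fin.val_zero, Fin.val_one, pow_zero, pow_one]
  ring

lemma Tmat_det_closed (p q a b : ℝ) (hpq : p + q = 1) (hne : p ≠ q)
    (ha : a ^ 2 = 1) (hb : b ^ 2 = p * q) (n : ℕ) :
    (Tmat a b n).det = a ^ n * (p ^ (n + 1) - q ^ (n + 1)) / (p - q) := by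
  have hQ : p - q ≠ 0 := sub_ne_zero.mpr hne
  induction n using Nat.twoStepInduction with
  | zero => rw [Tmat_det_zero, pow_zero, pow_one, pow_one, one_mul, div_self hQ]
  | one =>
    rw [Tmat_det_one, pow_one]
    have : p ^ 2 - q ^ 2 = (p - q) * (p + q) := by ring
    rw [this, hpq, mul_one, mul_div_assoc, div_self hQ, mul_one]
  | more n ih1 ih2 =>
    rw [Tmat_rec, ih1, ih2, hb]
    have ha2 : a ^ (n + 2) = a ^ n := by rw [pow_add, ha, mul_one]
    have ha1 : a * a ^ (n + 1) = a ^ n := by rw [← pow_succ']; exact ha2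
    have h3 : p ^ (n + 2 + 1) - q ^ (n + 2 + 1) =
        (p ^ (n + 1 + 1) - q ^ (n + 1 + 1)) - p * q * (p ^ (n + 1) - q ^ (n + 1)) := by
      have : p ^ (n + 3) - q ^ (n + 3) =
          (p + q) * (p ^ (n + 2) - q ^ (n + 2)) - p * q * (p ^ (n + 1) - q ^ (n + 1)) := by
        ring
      rw [show n + 2 + 1 = n + 3 from rfl, this, hpq, one_mul]
    rw [h3, ha2,
      show a * (a ^ (n + 1) * (p ^ (n + 1 + 1) - q ^ (n + 1 + 1)) / (p - q))
          = a ^ n * (p ^ (n + 1 + 1) - q ^ (n + 1 + 1)) / (p - q) from by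
        rw [← mul_div_assoc, ← mul_assoc, ha1]]
    field_simp

/-- **Lemma.** For `p ≠ q`, every `k ≥ 1`, and `λ ∈ {1, -1}`,
`det(λ·I_k - √(pq)·A_k) = λ^k·(p^{k+1} - q^{k+1})/(p - q)`. -/
theorem det_charMatrix_pathAdj_at_pm_one
    (p q : ℝ) (hp0 : 0 < p) (hp1 : p < 1) (hq0 : 0 < q) (hq1 : q < 1) (hpq : p + q = 1)
    (hne : p ≠ q) (k : ℕ) (hk : 1 ≤ k) (lam : ℝ) (hlam : lam = 1 ∨ lam = -1) :
    (lam • (1 : Matrix (Fin k) (Fin k) ℝ) - Real.sqrt (p * q) • pathAdj k).det =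
      lam ^ k * (p ^ (k + 1) - q ^ (k + 1)) / (p - q) := by
  have hM : lam • (1 : Matrix (Fin k) (Fin k) ℝ) - Real.sqrt (p * q) • pathAdj k
      = Tmat lam (-(Real.sqrt (p * q))) k := by
    ext i j
    simp only [Matrix.sub_apply, Matrix.smul_apply, Matrix.one_apply, pathAdj, Tmat,
      smul_eq_mul]
    rcases eq_or_ne i j with h | h
    · subst h
      have hd : ¬((i : ℕ) + 1 = i ∨ (i : ℕ) + 1 = i) := by omega
      simp [hd]
    · have hv : ¬ ((i : ℕ) = j) := fun hh => h (Fin.ext hh)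
      rw [if_neg h]
      split_ifs <;> simp
    
  have ha : lam ^ 2 = 1 := by rcases hlam with h | h <;> rw [h] <;> norm_num
  have hb : (-(Real.sqrt (p * q))) ^ 2 = p * q := by
    rw [neg_sq, Real.sq_sqrt (mul_nonneg hp0.le hq0.le)]
  rw [hM, Tmat_det_closed p q lam _ hpq hne ha hb k]
end

section
/- For every integer k ≥ 1 and for λ ∈ {1, −1}, det(λ·I_k − B_k) = λ^k · p^{k−1}, where B_k is the k×k real symmetric tridiagonal matrix with zero diagonal, off-diagonal entry √q between indices 0 and 1, and off-diagonal entries √(pq) between indices i and i+1 for 1 ≤ i ≤ k−2. -/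
open Finset

/-- The `k × k` top-left principal submatrix `B_k` of the Jacobi matrix of the path:
zero diagonal, `B_k(0,1) = √q`, and `B_k(i,i+1) = √(pq)` for `1 ≤ i ≤ k-2`, symmetric. -/
noncomputable def bMat (p q : ℝ) (k : ℕ) : Matrix (Fin k) (Fin k) ℝ :=
  fun i j =>
    if i.1 + 1 = j.1 then (if i.1 = 0 then Real.sqrt q else Real.sqrt (p * q))
    else if j.1 + 1 = i.1 then (if j.1 = 0 then Real.sqrt q else Real.sqrt (p * q))
    else 0

noncomputable def mMat (p q lam : ℝ) (k : ℕ) : Matrix (Fin k) (Fin k) ℝ :=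
  lam • (1 : Matrix (Fin k) (Fin k) ℝ) - bMat p q k
lemma mMat_entry_eq (p q lam : ℝ) {k k' : ℕ} (i j : Fin k) (i' j' : Fin k')
    (hi : i.1 = i'.1) (hj : j.1 = j'.1) :
    mMat p q lam k i j = mMat p q lam k' i' j' := by
  simp only [mMat, bMat, Matrix.sub_apply, Matrix.smul_apply, Matrix.one_apply, smul_eq_mul,
    ← Fin.val_eq_val, hi, hj]

lemma mMat_val (p q lam : ℝ) {k : ℕ} (i j : Fin k) :
    mMat p q lam k i j = (if i.1 = j.1 then lam else 0) -
      (if i.1 + 1 = j.1 then (if i.1 = 0 then Real.sqrt q else Real.sqrt (p * q))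
       else if j.1 + 1 = i.1 then (if j.1 = 0 then Real.sqrt q else Real.sqrt (p * q))
       else 0) := by
  simp only [mMat, bMat, Matrix.sub_apply, Matrix.smul_apply, Matrix.one_apply, smul_eq_mul,
    ← Fin.val_eq_val]
  split <;> simp

lemma rec_lemma (p q lam : ℝ) (hq : 0 ≤ p * q) (k : ℕ) :
    (mMat p q lam (k+3)).det =
      lam * (mMat p q lam (k+2)).det - (p*q) * (mMat p q lam (k+1)).det := by
  have hcol : (((Fin.last (k+1)).castSucc.succAbove (Fin.last (k+1))) : ℕ) = k+2 := by
    rw [Fin.succAbove, if_neg (by simp)]; simp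
  rw [Matrix.det_succ_row (mMat p q lam (k+3)) (Fin.last (k+2))]
  rw [Fin.sum_univ_castSucc, Fin.sum_univ_castSucc]
  have h0 : ∀ j : Fin (k+1),
      (-1:ℝ) ^ ((Fin.last (k+2) : ℕ) + ((j.castSucc.castSucc : Fin (k+3)) : ℕ)) *
        mMat p q lam (k+3) (Fin.last (k+2)) j.castSucc.castSucc *
        ((mMat p q lam (k+3)).submatrix (Fin.last (k+2)).succAbove
          (j.castSucc.castSucc).succAbove).det = 0 := by
    intro j
    have hj : (j : ℕ) ≤ k := Nat.lt_succ_iff.mp j.isLt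
    have hz : mMat p q lam (k+3) (Fin.last (k+2)) j.castSucc.castSucc = 0 := by
      rw [mMat_val]
      simp only [Fin.val_last, Fin.coe_castSucc]
      split_ifs <;> first | omega | ring1 | exact False.elim (by assumption)
    rw [hz]; ring
  rw [Finset.sum_congr rfl (fun j _ => h0 j), Finset.sum_const_zero, zero_add]
  have e2 : mMat p q lam (k+3) (Fin.last (k+2)) (Fin.last (k+2)) = lam := by
    rw [mMat_val]; simp only [Fin.val_last]
    split_ifs <;> first | omega | ring1 | exact False.elim (by assumption)
  have s2 : (-1:ℝ) ^ ((Fin.last (k+2) : ℕ) + (Fin.last (k+2) : ℕ)) = 1 := by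
    simp only [Fin.val_last]
    exact Even.neg_one_pow ⟨k+2, by ring⟩
  have m2 : (mMat p q lam (k+3)).submatrix (Fin.last (k+2)).succAbove
      (Fin.last (k+2)).succAbove = mMat p q lam (k+2) := by
    ext i j
    rw [Matrix.submatrix_apply, Fin.succAbove_last]
    exact mMat_entry_eq p q lam _ _ _ _ (by simp) (by simp)
  have e1 : mMat p q lam (k+3) (Fin.last (k+2)) (Fin.last (k+1)).castSucc
      = -Real.sqrt (p*q) := by
    rw [mMat_val]; simp only [Fin.val_last, Fin.coe_castSucc]
    split_ifs <;> first | omega | ring1 | exact False.elim (by assumption)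
  have s1 : (-1:ℝ) ^ ((Fin.last (k+2) : ℕ) + ((Fin.last (k+1)).castSucc : ℕ)) = -1 := by
    simp only [Fin.val_last, Fin.coe_castSucc]
    exact Odd.neg_one_pow ⟨k+1, by ring⟩
  set N := (mMat p q lam (k+3)).submatrix (Fin.last (k+2)).succAbove
      ((Fin.last (k+1)).castSucc).succAbove with hN
  have hdetN : N.det = -Real.sqrt (p*q) * (mMat p q lam (k+1)).det := by
    rw [Matrix.det_succ_column N (Fin.last (k+1))]
    rw [Fin.sum_univ_castSucc]
    have hz0 : ∀ i : Fin (k+1),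
        (-1:ℝ) ^ (((i.castSucc : Fin (k+2)) : ℕ) + ((Fin.last (k+1)) : ℕ)) *
          N i.castSucc (Fin.last (k+1)) *
          (N.submatrix (i.castSucc).succAbove (Fin.last (k+1)).succAbove).det = 0 := by
      intro i
      have hi : (i : ℕ) ≤ k := Nat.lt_succ_iff.mp i.isLt
      have : N i.castSucc (Fin.last (k+1)) = 0 := by
        rw [hN, Matrix.submatrix_apply, Fin.succAbove_last, mMat_val, hcol]
        simp only [Fin.coe_castSucc]
        split_ifs <;> first | omega | ring1 | exact False.elim (by assumption)
      rw [this]; ring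
    rw [Finset.sum_congr rfl (fun i _ => hz0 i), Finset.sum_const_zero, zero_add]
    have ee : N (Fin.last (k+1)) (Fin.last (k+1)) = -Real.sqrt (p*q) := by
      rw [hN, Matrix.submatrix_apply, Fin.succAbove_last, mMat_val, hcol]
      simp only [Fin.coe_castSucc, Fin.val_last]
      split_ifs <;> first | omega | ring1 | exact False.elim (by assumption)
    have ss : (-1:ℝ) ^ (((Fin.last (k+1)) : ℕ) + ((Fin.last (k+1)) : ℕ)) = 1 := by
      simp only [Fin.val_last]
      exact Even.neg_one_pow ⟨k+1, by ring⟩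
    have mm : N.submatrix (Fin.last (k+1)).succAbove (Fin.last (k+1)).succAbove
        = mMat p q lam (k+1) := by
      ext i j
      rw [Matrix.submatrix_apply, Fin.succAbove_last, hN, Matrix.submatrix_apply,
        Fin.succAbove_last]
      refine mMat_entry_eq p q lam _ _ _ _ (by simp) ?_
      have hlt : (j.castSucc : Fin (k+2)).castSucc < (Fin.last (k+1)).castSucc := by
        simp only [Fin.lt_def, Fin.coe_castSucc, Fin.val_last]
        exact j.isLt
      rw [Fin.succAbove, if_pos hlt]
      simp
    rw [ee, ss, mm]; ring
  rw [e2, s2, m2, e1, s1, hdetN]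
  linear_combination (-(mMat p q lam (k+1)).det) * Real.mul_self_sqrt hq


lemma det_one' (p q lam : ℝ) : (mMat p q lam 1).det = lam := by
  rw [Matrix.det_fin_one, mMat_val]
  norm_num

lemma det_two' (p q lam : ℝ) (hq0 : 0 ≤ q) : (mMat p q lam 2).det = lam * lam - q := by
  rw [Matrix.det_fin_two]
  rw [mMat_val, mMat_val, mMat_val, mMat_val]
  norm_num [Real.mul_self_sqrt hq0]

/-- **Lemma.** For every `k ≥ 1` and `λ ∈ {1, -1}`, `det(λ·I_k - B_k) = λ^k·p^{k-1}`. -/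
theorem det_charMatrix_bMat_at_pm_one
    (p q : ℝ) (hp0 : 0 < p) (hp1 : p < 1) (hq0 : 0 < q) (hq1 : q < 1) (hpq : p + q = 1)
    (k : ℕ) (hk : 1 ≤ k) (lam : ℝ) (hlam : lam = 1 ∨ lam = -1) :
    (lam • (1 : Matrix (Fin k) (Fin k) ℝ) - bMat p q k).det = lam ^ k * p ^ (k - 1) := by
  have hl2 : lam * lam = 1 := by rcases hlam with rfl | rfl <;> norm_num
  have hq' : q = 1 - p := by linarith
  have key : ∀ n : ℕ, (mMat p q lam (n+1)).det = lam ^ (n+1) * p ^ n := by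
    intro n
    induction n using Nat.strong_induction_on with
    | _ n ih =>
      match n, ih with
      | 0, _ => simpa using det_one' p q lam
      | 1, _ => rw [det_two' p q lam hq0.le, hq']; linear_combination (1 - p) * hl2
      | (m+2), ih =>
        have h1 := ih (m+1) (by omega)
        have h0 := ih m (by omega)
        rw [show (m+2)+1 = m+3 from rfl,
          rec_lemma p q lam (mul_nonneg hp0.le hq0.le) m, h1, h0, hq']
        linear_combination (lam^(m+1)*p^(m+1) - lam^(m+1)*p^(m+2)) * hl2
  obtain ⟨n, rfl⟩ : ∃ n, k = n + 1 := ⟨k - 1, by omega⟩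
  simpa [mMat] using key n
end

section
/- For 0 < p < 1 and q = 1 − p, (2p/π) · ∫_0^π sin²k / (1 − 4pq·cos²k) dk equals 1 if p ≥ q, and equals p/q if p < q. Equivalently, this integral equals 1 − c_0, where c_0 = 1 − p/q if p < q and c_0 = 0 otherwise. -/
open Filter

lemma arctan_deriv_identity (c S C : ℝ) (hc0 : 0 < c) (hc1 : c < 1)
    (hS : S^2 = 1 - C^2) :
    (1 / (1 + (c*S/(1 - c*C))^2)) *
      ((c*(C*2)*(1 - c*C) - c*S*(0 - c*(-S*2)))/(1 - c*C)^2) =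
    2*c*(C - c)/(1 + c^2 - 2*c*C) := by
  have hC1 : -1 ≤ C := by nlinarith [sq_nonneg S]
  have hC2 : C ≤ 1 := by nlinarith [sq_nonneg S]
  have hd0 : (0:ℝ) < 1 - c*C := by nlinarith
  have hq : 0 < 1 + c^2 - 2*c*C := by nlinarith [sq_nonneg (1 - c)]
  have h2 : c * S * (0 - c * (-S * 2)) = 2*c^2*(1-C^2) := by rw [← hS]; ring
  rw [h2, div_pow, mul_pow, hS]
  have e1 : 1 + c ^ 2 * (1 - C ^ 2) / (1 - c * C) ^ 2 =
      (1 + c^2 - 2*c*C)/(1 - c*C)^2 := by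
    field_simp
    ring
  rw [e1, one_div_div, div_mul_div_comm]
  rw [div_eq_div_iff (by positivity) hq.ne']
  ring

lemma final_alg_identity (s x : ℝ) (hs0 : 0 < s) (hs1 : s < 1) (hx : x^2 ≤ 1) :
    (1 - x^2)/(1 - (1-s^2)*x^2) =
      1/(1-s^2) - s/(1-s^2) *
        (1 + 2*((1-s)/(1+s))*((2*x^2-1) - (1-s)/(1+s))/
          (1 + ((1-s)/(1+s))^2 - 2*((1-s)/(1+s))*(2*x^2-1))) := by
  have hs1' : (0:ℝ) < 1 + s := by linarith
  have ha0 : (0:ℝ) < 1 - s^2 := by nlinarith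
  have hden : (0:ℝ) < 1 - (1-s^2)*x^2 := by nlinarith
  have hqe : 1 + ((1-s)/(1+s))^2 - 2*((1-s)/(1+s))*(2*x^2-1) =
      4 * (1 - (1-s^2) * x^2)/(1+s)^2 := by
    field_simp
    ring
  rw [hqe, div_div_eq_mul_div]
  have hden' : 1 - x^2*(1-s^2) ≠ 0 := by nlinarith
  field_simp
  ring

lemma key_integral (s : ℝ) (hs0 : 0 < s) (hs1 : s < 1) :
    ∫ k in (0:ℝ)..Real.pi, Real.sin k ^ 2 / (1 - (1 - s^2) * Real.cos k ^ 2) =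
      Real.pi * (1 - s) / (1 - s^2) := by
  have hs1' : (0:ℝ) < 1 + s := by linarith
  have hc0 : 0 < (1 - s)/(1 + s) := div_pos (by linarith) hs1'
  have hc1 : (1 - s)/(1 + s) < 1 := by rw [div_lt_one hs1']; linarith
  have ha0 : (0:ℝ) < 1 - s^2 := by nlinarith
  have hden : ∀ k : ℝ, 0 < 1 - (1 - s^2) * Real.cos k ^ 2 := by
    intro k
    nlinarith [Real.sin_sq_add_cos_sq k, sq_nonneg (Real.sin k), sq_nonneg (Real.cos k)]
  have hden2 : ∀ u : ℝ, 0 < 1 - (1 - s)/(1 + s) * Real.cos u := by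
    intro u
    nlinarith [Real.neg_one_le_cos u, Real.cos_le_one u]
  set F : ℝ → ℝ := fun k =>
    k/(1 - s^2) - (s/(1 - s^2))*(k + Real.arctan ((1 - s)/(1 + s) * Real.sin (2*k) /
      (1 - (1 - s)/(1 + s) * Real.cos (2*k)))) with hF
  have hderiv : ∀ k : ℝ, HasDerivAt F (Real.sin k ^ 2 / (1 - (1 - s^2) * Real.cos k ^ 2)) k := by
    intro k
    have h2x : HasDerivAt (fun x : ℝ => 2 * x) 2 k := by
      simpa using (hasDerivAt_id k).const_mul 2
    have hnum : HasDerivAt (fun x => (1 - s)/(1 + s) * Real.sin (2*x))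
        ((1 - s)/(1 + s) * (Real.cos (2*k) * 2)) k :=
      (h2x.sin).const_mul _
    have hd : HasDerivAt (fun x => 1 - (1 - s)/(1 + s) * Real.cos (2*x))
        (0 - (1 - s)/(1 + s) * (-Real.sin (2*k) * 2)) k :=
      (hasDerivAt_const k (1:ℝ)).sub ((h2x.cos).const_mul _)
    have hg := hnum.div hd (hden2 (2*k)).ne'
    have harc := hg.arctan
    have hlin : HasDerivAt (fun x : ℝ => x / (1 - s^2)) (1/(1 - s^2)) k := by
      simpa using (hasDerivAt_id k).div_const (1 - s^2)
    have hsum := ((hasDerivAt_id k).add harc).const_mul (s/(1 - s^2))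
    have htot := hlin.sub hsum
    convert htot using 1
    case e'_4 => with_unfolding_all rfl
    case e'_5 => with_unfolding_all rfl
    case e'_8 => rfl
    rw [show (1 - s) / (1 + s) * (Real.cos (2 * k) * 2) * (1 - (1 - s) / (1 + s) * Real.cos (2 * k)) -
        (1 - s) / (1 + s) * Real.sin (2 * k) * (0 - (1 - s) / (1 + s) * (-Real.sin (2 * k) * 2)) =
        (1 - s)/(1 + s)*(Real.cos (2*k)*2)*(1 - (1 - s)/(1 + s)*Real.cos (2*k)) -
        (1 - s)/(1 + s)*Real.sin (2*k)*(0 - (1 - s)/(1 + s)*(-Real.sin (2*k)*2)) from rfl]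
    simp only [Pi.div_apply]
    rw [arctan_deriv_identity ((1 - s)/(1 + s)) (Real.sin (2*k)) (Real.cos (2*k)) hc0 hc1
      (Real.sin_sq (2*k))]
    rw [Real.cos_two_mul k, Real.sin_sq k]
    exact final_alg_identity s (Real.cos k) hs0 hs1
      (by nlinarith [Real.sin_sq_add_cos_sq k, sq_nonneg (Real.sin k)])
  have hint : IntervalIntegrable (fun k => Real.sin k ^ 2 / (1 - (1 - s^2) * Real.cos k ^ 2))
      MeasureTheory.volume 0 Real.pi := by
    apply Continuous.intervalIntegrable
    exact (Real.continuous_sin.pow 2).div (by continuity) (fun k => (hden k).ne')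
  rw [intervalIntegral.integral_eq_sub_of_hasDerivAt (fun k _ => hderiv k) hint]
  have hFpi : F Real.pi = Real.pi/(1 - s^2) - (s/(1 - s^2))*Real.pi := by
    simp [hF, Real.sin_two_pi, Real.cos_two_pi]
  have hF0 : F 0 = 0 := by
    simp [hF]
  rw [hFpi, hF0]
  field_simp
  ring

/-- **Lemma (total mass of the absolutely continuous part).** For `0 < p < 1` and
`q = 1 - p`, `(2p/π)·∫_0^π sin²k/(1 - 4pq·cos²k) dk` equals `1` if `p ≥ q` and `p/q`
if `p < q`; equivalently, it equals `1 - c_0`. -/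
theorem integral_sin_sq_div_one_sub_four_pq_cos_sq
    (p q : ℝ) (hp0 : 0 < p) (hp1 : p < 1) (hq : q = 1 - p) :
    (2 * p / Real.pi) *
        ∫ k in (0:ℝ)..Real.pi, Real.sin k ^ 2 / (1 - 4 * p * q * Real.cos k ^ 2) =
      if p < q then p / q else 1 := by
  subst hq
  have hpi : (0:ℝ) < Real.pi := Real.pi_pos
  rcases lt_trichotomy p (1/2) with hhalf | hhalf | hhalf
  · -- p < q case, s = 1 - 2p
    have hs0 : 0 < 1 - 2*p := by linarith
    have hs1 : 1 - 2*p < 1 := by linarith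
    have hfac : (4:ℝ) * p * (1 - p) = 1 - (1 - 2*p)^2 := by ring
    rw [hfac, key_integral (1 - 2*p) hs0 hs1]
    rw [if_pos (by linarith)]
    have h1p : (0:ℝ) < 1 - p := by linarith
    have hne : (1:ℝ) - (1 - 2*p)^2 ≠ 0 := by nlinarith
    field_simp
    ring
  · -- p = 1/2
    subst hhalf
    rw [if_neg (by norm_num)]
    have h1 : ∀ k ∈ Set.Ioo (0:ℝ) Real.pi,
        Real.sin k ^ 2 / (1 - 4 * (1/2) * (1 - 1/2) * Real.cos k ^ 2) = 1 := by
      intro k hk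
      have hs : 0 < Real.sin k := Real.sin_pos_of_pos_of_lt_pi hk.1 hk.2
      have : 1 - 4 * (1/2) * (1 - 1/2 : ℝ) * Real.cos k ^ 2 = Real.sin k ^ 2 := by
        rw [Real.sin_sq]; ring
      rw [this, div_self (by positivity)]
    have : (∫ k in (0:ℝ)..Real.pi,
        Real.sin k ^ 2 / (1 - 4 * (1/2) * (1 - 1/2) * Real.cos k ^ 2)) = Real.pi := by
      rw [intervalIntegral.integral_of_le hpi.le, MeasureTheory.integral_Ioc_eq_integral_Ioo]
      rw [MeasureTheory.setIntegral_congr_fun measurableSet_Ioo h1]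
      simp [hpi.le]
    rw [this]
    field_simp
  · -- p > q case, s = 2p - 1
    have hs0 : 0 < 2*p - 1 := by linarith
    have hs1 : 2*p - 1 < 1 := by linarith
    have hfac : (4:ℝ) * p * (1 - p) = 1 - (2*p - 1)^2 := by ring
    rw [hfac, key_integral (2*p - 1) hs0 hs1]
    rw [if_neg (by linarith)]
    have hne : (1:ℝ) - (2*p - 1)^2 ≠ 0 := by nlinarith
    field_simp
    ring
end
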